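/- Let n, ξ ∈ ℕ, let (a_i)_{i=1}^n be a non-increasing finite sequence of non-negative real numbers and let t_1 < ⋯ < t_n be natural numbers. Then ‖Σ_{i=1}^n (−1)^i a_i e_{t_i}‖_{Cξ} ≤ ‖Σ_{i=1}^n a_i e_{t_i}‖_ξ, where ‖·‖_ξ is the Schreier norm and ‖·‖_{Cξ} is the conditional Schreier norm on c00. -/

import Mathlib

open Filter Topology

open scoped Classical

noncomputable section

namespace Gasparis

/-! ## Schreier families and admissibility -/

/-- `E < F` for finite sets: every element of `E` is smaller than every element of `F`. -/
def FinLt (E F : Finset ℕ) : Prop := ∀ i ∈ E, ∀ j ∈ F, i < j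

/-- The Schreier families `S_n`. -/
def Schreier : ℕ → Set (Finset ℕ)
  | 0 => {F | F.card ≤ 1}
  | n + 1 => {F | F = ∅ ∨ ∃ (k : ℕ) (G : ℕ → Finset ℕ), 0 < k ∧
      (∀ i < k, G i ∈ Schreier n ∧ (G i).Nonempty) ∧
      (∀ i j, i < j → j < k → FinLt (G i) (G j)) ∧
      (∀ j ∈ G 0, k ≤ j) ∧
      F = (Finset.range k).biUnion G}

/-- Minimum of a finite set of naturals (junk value `0` for `∅`). -/
def minF (I : Finset ℕ) : ℕ := sInf (I : Set ℕ)

/-- Minimum of the support of a finitely supported sequence. -/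
def minSupp (f : ℕ →₀ ℝ) : ℕ := minF f.support

/-- `I 0 < I 1 < ⋯ < I (k-1)` is an `S_n`-admissible collection. -/
def Admissible (n k : ℕ) (I : ℕ → Finset ℕ) : Prop :=
  (∀ i < k, (I i).Nonempty) ∧
  (∀ i j, i < j → j < k → FinLt (I i) (I j)) ∧
  ((Finset.range k).image fun i => minF (I i)) ∈ Schreier n

/-- An (unordered) family of finite sets is `S_n`-admissible. -/
def FamAdmissible (n : ℕ) (𝓕 : Finset (Finset ℕ)) : Prop :=
  (∀ I ∈ 𝓕, I.Nonempty) ∧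
  (∀ I ∈ 𝓕, ∀ J ∈ 𝓕, I ≠ J → FinLt I J ∨ FinLt J I) ∧
  𝓕.image minF ∈ Schreier n

/-- `F` is a maximal (under inclusion) member of `S_n`. -/
def MaximalSchreier (n : ℕ) (F : Finset ℕ) : Prop :=
  F ∈ Schreier n ∧ ∀ G ∈ Schreier n, F ⊆ G → G = F

/-! ## The Schreier and conditional Schreier norms on `c₀₀ = ℕ →₀ ℝ` -/

/-- The `n`-th Schreier norm on `c₀₀`. -/
def schreierNorm (n : ℕ) (x : ℕ →₀ ℝ) : ℝ :=
  sSup {r : ℝ | ∃ F ∈ Schreier n, r = ∑ i ∈ F, |x i|}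

/-- The `n`-th conditional Schreier norm on `c₀₀`. -/
def cschreierNorm (n : ℕ) (x : ℕ →₀ ℝ) : ℝ :=
  sSup {r : ℝ | ∃ (k : ℕ) (J : ℕ → Finset ℕ),
    (∀ i < k, ∃ a b : ℕ, J i = Finset.Icc a b) ∧ Admissible n k J ∧
    r = ∑ i ∈ Finset.range k, |∑ p ∈ J i, x p|}

/-! ## Block sequences, described by their coefficients -/

/-- A block basis, given by the (finitely supported) coefficient sequences of its vectors:
successive nonempty supports. -/
def IsBlockSeq (u : ℕ → ℕ →₀ ℝ) : Prop :=
  (∀ k, u k ≠ 0) ∧ ∀ k, ∀ i ∈ (u k).support, ∀ j ∈ (u (k + 1)).support, i < j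

/-- `v` is a block basis of the block basis `u`. -/
def IsBlockSeqOf (v u : ℕ → ℕ →₀ ℝ) : Prop :=
  IsBlockSeq v ∧ ∃ d : ℕ → ℕ →₀ ℝ, IsBlockSeq d ∧
    ∀ k, v k = (d k).sum fun i a => a • u i

/-- The vector of `X` with coefficients `f` with respect to the sequence `e`. -/
def vecIn {X : Type*} [AddCommGroup X] [Module ℝ X] (e : ℕ → X) (f : ℕ →₀ ℝ) : X :=
  f.sum fun i a => a • e i

/-! ## Schauder bases -/

/-- A Schauder basis of a Banach space, bundled with its biorthogonal functionals. -/
structure SchauderBasis (X : Type*) [NormedAddCommGroup X] [NormedSpace ℝ X] where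
  e : ℕ → X
  coord : ℕ → X →L[ℝ] ℝ
  biorth : ∀ i j, coord i (e j) = if i = j then (1 : ℝ) else 0
  expand : ∀ x : X, Tendsto (fun k => ∑ i ∈ Finset.range k, coord i x • e i) atTop (𝓝 x)

variable {X : Type*}

def NormalizedBasis [NormedAddCommGroup X] [NormedSpace ℝ X] (b : SchauderBasis X) : Prop :=
  ∀ i, ‖b.e i‖ = 1

/-- Every projection onto an interval of coordinates has norm at most `1`. -/
def Bimonotone [NormedAddCommGroup X] [NormedSpace ℝ X] (b : SchauderBasis X) : Prop :=
  ∀ (x : X) (a c : ℕ), ‖∑ i ∈ Finset.Icc a c, b.coord i x • b.e i‖ ≤ ‖x‖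

/-- The biorthogonal functionals form a basis of the dual: the expansion of every
continuous functional converges to it. -/
def Shrinking [NormedAddCommGroup X] [NormedSpace ℝ X] (b : SchauderBasis X) : Prop :=
  ∀ f : X →L[ℝ] ℝ,
    Tendsto (fun k => ‖f - ∑ i ∈ Finset.range k, f (b.e i) • b.coord i‖) atTop (𝓝 (0 : ℝ))

def BoundedlyComplete [NormedAddCommGroup X] [NormedSpace ℝ X] (b : SchauderBasis X) : Prop :=
  ∀ a : ℕ → ℝ, (∃ C : ℝ, ∀ k, ‖∑ i ∈ Finset.range k, a i • b.e i‖ ≤ C) →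
    ∃ x : X, Tendsto (fun k => ∑ i ∈ Finset.range k, a i • b.e i) atTop (𝓝 x)

/-- `1`-unconditionality: changing signs of coefficients does not increase the norm. -/
def OneUnconditional [NormedAddCommGroup X] [NormedSpace ℝ X] (b : SchauderBasis X) : Prop :=
  ∀ (a ε : ℕ → ℝ) (F : Finset ℕ), (∀ i, ε i = 1 ∨ ε i = -1) →
    ‖∑ i ∈ F, (ε i * a i) • b.e i‖ ≤ ‖∑ i ∈ F, a i • b.e i‖

/-! ## Spreading models, asymptotic `ℓ¹` and the distortion property -/

/-- `(x_n)` is an `ε`-`ℓ¹ⁿ` spreading model. -/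
def SpreadingModelL1 [NormedAddCommGroup X] [NormedSpace ℝ X]
    (x : ℕ → X) (ε : ℝ) (n : ℕ) : Prop :=
  ∀ F ∈ Schreier n, ∀ a : ℕ → ℝ, ε * ∑ i ∈ F, |a i| ≤ ‖∑ i ∈ F, a i • x i‖

/-- Every normalized block basis of `(e_n)` is an `ε`-`ℓ¹ⁿ` spreading model. -/
def AsymptoticL1 [NormedAddCommGroup X] [NormedSpace ℝ X]
    (b : SchauderBasis X) (ε : ℝ) (n : ℕ) : Prop :=
  ∀ u : ℕ → ℕ →₀ ℝ, IsBlockSeq u → (∀ k, ‖vecIn b.e (u k)‖ = 1) →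
    SpreadingModelL1 (fun k => vecIn b.e (u k)) ε n

/-- The modulus `τ(U, δ) ∈ ℕ∞` of the block subspace `U` generated by the block basis `u`. -/
def tau [NormedAddCommGroup X] [NormedSpace ℝ X]
    (e : ℕ → X) (u : ℕ → ℕ →₀ ℝ) (δ : ℝ) : ℕ∞ :=
  sSup {z : ℕ∞ | ∃ ζ : ℕ, z = (ζ : ℕ∞) ∧
    ∀ v : ℕ → ℕ →₀ ℝ, IsBlockSeqOf v u → (∀ k, ‖vecIn e (v k)‖ = 1) →
      ∃ φ : ℕ → ℕ, StrictMono φ ∧ SpreadingModelL1 (fun k => vecIn e (v (φ k))) δ ζ}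

/-- The `(d, N, P, a)` distortion property (with the standing assumptions on `d, N, P, a`). -/
structure DistortionProperty [NormedAddCommGroup X] [NormedSpace ℝ X]
    (b : SchauderBasis X) (d : ℝ) (N P : ℕ → ℕ) (δ : ℕ → ℝ) : Prop where
  one_lt_d : 1 < d
  N_mono : StrictMono N
  P_mono : StrictMono P
  N_le_P : ∀ i, (if i = 0 then 1 else N (i - 1)) ≤ P i
  P_lt_N : ∀ i, 2 * P i < N i
  δ_pos : ∀ i, 0 < δ i
  δ_anti : ∀ i, δ (i + 1) ≤ δ i
  δ_null : Tendsto δ atTop (𝓝 (0 : ℝ))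
  asymptotic : ∀ j, AsymptoticL1 b (δ j) (N j)
  tau_lt : ∀ j, ∀ u : ℕ → ℕ →₀ ℝ, IsBlockSeq u → tau b.e u (d * δ j) < (P j : ℕ∞)

/-! ## Subspaces, hereditary indecomposability, total incomparability, distortion -/

/-- An (infinite-dimensional, closed) subspace of a Banach space. -/
def IsBanachSubspace [NormedAddCommGroup X] [NormedSpace ℝ X] (Y : Submodule ℝ X) : Prop :=
  IsClosed (Y : Set X) ∧ ¬ FiniteDimensional ℝ Y

/-- Hereditarily indecomposable. -/
def HI (X : Type*) [NormedAddCommGroup X] [NormedSpace ℝ X] : Prop :=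
  ∀ Y Z : Submodule ℝ X, IsBanachSubspace Y → IsBanachSubspace Z → Y ⊓ Z = ⊥ →
    ¬ IsClosed ((Y ⊔ Z : Submodule ℝ X) : Set X)

/-- No subspace of `X` is isomorphic to a subspace of `Y`. -/
def TotallyIncomparable (X Y : Type*) [NormedAddCommGroup X] [NormedSpace ℝ X]
    [NormedAddCommGroup Y] [NormedSpace ℝ Y] : Prop :=
  ∀ (U : Submodule ℝ X) (V : Submodule ℝ Y), IsBanachSubspace U → IsBanachSubspace V →
    IsEmpty (U ≃L[ℝ] V)

/-- An equivalent norm on `X`. -/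
structure IsEquivNorm [NormedAddCommGroup X] [NormedSpace ℝ X] (Nn : X → ℝ) : Prop where
  add_le : ∀ x y : X, Nn (x + y) ≤ Nn x + Nn y
  smul_eq : ∀ (a : ℝ) (x : X), Nn (a • x) = |a| * Nn x
  lower : ∃ c : ℝ, 0 < c ∧ ∀ x : X, c * ‖x‖ ≤ Nn x
  upper : ∃ C : ℝ, 0 < C ∧ ∀ x : X, Nn x ≤ C * ‖x‖

def ArbitrarilyDistortable (X : Type*) [NormedAddCommGroup X] [NormedSpace ℝ X] : Prop :=
  ∀ lam : ℝ, 1 < lam → ∃ Nn : X → ℝ, IsEquivNorm Nn ∧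
    ∀ Y : Submodule ℝ X, IsBanachSubspace Y →
      ∃ x ∈ Y, ∃ y ∈ Y, x ≠ 0 ∧ y ≠ 0 ∧ ‖x‖ = ‖y‖ ∧ lam < Nn x / Nn y

/-- Reflexivity: the canonical embedding into the double dual is surjective. -/
def IsReflexiveSpace (X : Type*) [NormedAddCommGroup X] [NormedSpace ℝ X] : Prop :=
  Function.Surjective (NormedSpace.inclusionInDoubleDual ℝ X)

/-- A bundled (real, infinite-dimensional or not) Banach space. -/
structure BanachSpaceB where
  carrier : Type
  [grp : NormedAddCommGroup carrier]
  [mod : NormedSpace ℝ carrier]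
  [comp : CompleteSpace carrier]

attribute [instance] BanachSpaceB.grp BanachSpaceB.mod BanachSpaceB.comp

/-! ## `M`-good sequences -/

/-- The sequence `f_j^N` (0-indexed: `fN m n j` is the paper's `f_{j+1}^N`). -/
def fN (m n : ℕ → ℕ) : ℕ → ℕ
  | 0 => 1
  | j + 1 => sSup {s : ℕ | ∃ ρ : ℕ → ℕ,
      (∏ i ∈ Finset.range (j + 1), m i ^ ρ i) < m (j + 1) ^ 3 ∧
      s = ∑ i ∈ Finset.range (j + 1), ρ i * n i}

/-- Standing assumptions on the fixed sequences `M = (m_i)` and `L = (l_i)`. -/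
structure MLParams (m l : ℕ → ℕ) : Prop where
  m_mono : StrictMono m
  m_six : 6 < m 0
  m_sq : ∀ i, m i ^ 2 < m (i + 1)
  l_mono : StrictMono l
  l_four : 4 < l 0
  l_exp : ∀ i, m i < 2 ^ l i

/-- `N = (n_i)` (an infinite subset of `ℕ`, given by its increasing enumeration)
is `M`-good: `l_j (f_j^N + 1) < n_j` for all `j`. -/
def MGoodSeq (m l n : ℕ → ℕ) : Prop :=
  StrictMono n ∧ ∀ j, l j * (fN m n j + 1) < n j

/-! ## Appropriate trees -/

/-- A node of a tree: a nonempty list of triples `(m-entry, interval, sign)`. -/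
abbrev GNode := List (ℕ × Finset ℕ × ℤ)

def mEnt (α : GNode) : ℕ := (α.getLastD (0, ∅, 1)).1
def iEnt (α : GNode) : Finset ℕ := (α.getLastD (0, ∅, 1)).2.1
def sEnt (α : GNode) : ℤ := (α.getLastD (0, ∅, 1)).2.2

/-- `α` is a terminal node of the tree `T`. -/
def IsTerminalIn (T : Finset GNode) (α : GNode) : Prop :=
  ∀ β ∈ T, α <+: β → β = α

/-- The immediate successors of `α` in `T`. -/
def childrenIn (T : Finset GNode) (α : GNode) : Finset GNode :=
  T.filter fun β => β.length = α.length + 1 ∧ α <+: β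

/-- Appropriate trees (with respect to the data `M = (m_i)`, `N = (n_i)`). -/
def IsAppropriate (m n : ℕ → ℕ) (T : Finset GNode) : Prop :=
  T.Nonempty ∧
  (∀ α ∈ T, α ≠ []) ∧
  (∀ α ∈ T, ∀ k, 0 < k → k ≤ α.length → α.take k ∈ T) ∧
  (∀ α ∈ T, ∀ β ∈ T, α.length = 1 → β.length = 1 → α = β) ∧
  (∀ α ∈ T, ∀ t ∈ α, ((t : ℕ × Finset ℕ × ℤ).2.2 = 1 ∨ t.2.2 = -1) ∧ t.2.1.Nonempty) ∧
  (∀ α ∈ T, IsTerminalIn T α → mEnt α = 0 ∧ ∃ p : ℕ, iEnt α = {p}) ∧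
  (∀ α ∈ T, ¬ IsTerminalIn T α → ∃ j : ℕ, mEnt α = m j ∧
    FamAdmissible (n j) ((childrenIn T α).image iEnt) ∧
    iEnt α = (childrenIn T α).sup iEnt)

/-- The family `𝒢` of appropriate trees. -/
def 𝒢 (m n : ℕ → ℕ) : Set (Finset GNode) := {T | IsAppropriate m n T}

/-- The root of a tree. -/
def rootOf (T : Finset GNode) : GNode :=
  if h : (T.filter fun α => α.length = 1).Nonempty then h.choose else []

/-- `m(α)`: product of the `M`-entries of the predecessor of `α`. -/
def mWeight (α : GNode) : ℕ := (α.dropLast.map fun t => t.1).prod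

/-- `ε(α)`: product of the signs of the proper predecessors of `α`. -/
def epsProd (α : GNode) : ℤ := (α.dropLast.map fun t => t.2.2).prod

/-- `n(α)`: sum of the `n_i` over the `M`-entries `m_i` of the predecessor of `α`. -/
def nVal (m n : ℕ → ℕ) (α : GNode) : ℕ :=
  (α.dropLast.map fun t => n (sInf {j | m j = t.1})).sum

/-- The point `p_α` of a terminal node. -/
def pOf (α : GNode) : ℕ := minF (iEnt α)

/-- The measure `mu_𝒯` associated to a tree. -/
def treeMeasure (T : Finset GNode) : ℕ →₀ ℝ :=
  ∑ α ∈ T.filter (fun α => IsTerminalIn T α),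
    ((mWeight α : ℝ)⁻¹ * ((epsProd α * sEnt α : ℤ) : ℝ)) • Finsupp.single (pOf α) (1 : ℝ)

/-- The weight `w(𝒯)`. -/
def treeWeight (T : Finset GNode) : ℕ :=
  if T.card = 1 then 1 else mEnt (rootOf T)

/-- Action of a finitely supported measure on an element of `c₀₀`. -/
def mpair (mu x : ℕ →₀ ℝ) : ℝ := mu.sum fun i c => c * x i

/-- The norming set `𝓜 = {mu_𝒯 : 𝒯 ∈ 𝒢}`. -/
def normingSetOf (m n : ℕ → ℕ) : Set (ℕ →₀ ℝ) :=
  {mu | ∃ T ∈ 𝒢 m n, mu = treeMeasure T}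

/-- The norm of `X_𝓜` on `c₀₀`. -/
def mNorm (m n : ℕ → ℕ) (x : ℕ →₀ ℝ) : ℝ :=
  sSup {r : ℝ | ∃ mu ∈ normingSetOf m n, r = mpair mu x}

/-- A family of trees is `S_k`-admissible if the family of root intervals is. -/
def TreeFamAdmissible (k : ℕ) (G₀ : Finset (Finset GNode)) : Prop :=
  FamAdmissible k (G₀.image fun T => iEnt (rootOf T))

/-! ## The repeated averages hierarchy -/

/-- Auxiliary step for the repeated averages hierarchy. -/
def ravgS (f : Set ℕ → ℕ → (ℕ →₀ ℝ)) (R : Set ℕ) : ℕ → (ℕ →₀ ℝ)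
  | 0 => ((sInf R : ℕ) : ℝ)⁻¹ • ∑ i ∈ Finset.range (sInf R), f R i
  | k + 1 =>
    let R' : Set ℕ := {r ∈ R | ∀ j ∈ (ravgS f R k).support, j < r}
    ((sInf R' : ℕ) : ℝ)⁻¹ • ∑ i ∈ Finset.range (sInf R'), f R' i

/-- The repeated averages hierarchy `ξ_k^R` (`k` 0-indexed). -/
def ravg : ℕ → Set ℕ → ℕ → (ℕ →₀ ℝ)
  | 0 => fun R k => Finsupp.single (Nat.nth (· ∈ R) k) 1
  | ξ + 1 => ravgS (ravg ξ)

/-- `‖mu‖_k = sup{mu(F) : F ∈ S_k}`. -/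
def measNorm (k : ℕ) (mu : ℕ →₀ ℝ) : ℝ :=
  sSup {r : ℝ | ∃ F ∈ Schreier k, r = ∑ i ∈ F, mu i}

/-- The sequence of minima of supports of a block basis. -/
def pSeq (u : ℕ → ℕ →₀ ℝ) (k : ℕ) : ℕ := minSupp (u k)

/-- `v` is a generic `(ε, ξ)` average of the block basis `u`. -/
def IsGenericAvg (u : ℕ → ℕ →₀ ℝ) (ε : ℝ) (ξ : ℕ) (v : ℕ →₀ ℝ) : Prop :=
  ∃ R : Set ℕ, R.Infinite ∧ R ⊆ Set.range (pSeq u) ∧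
    measNorm (ξ - 1) (ravg ξ R 0) < ε ∧
    v = (ravg ξ R 0).sum fun q c => c • u (sInf {k | pSeq u k = q})

/-- `v` is an `(ε, ξ)` average of `u`: a generic `(ε, ξ)` average of a normalized
(w.r.t. the norm `nrm`) block basis of `u`. -/
def IsAvg (nrm : (ℕ →₀ ℝ) → ℝ) (u : ℕ → ℕ →₀ ℝ) (ε : ℝ) (ξ : ℕ) (v : ℕ →₀ ℝ) : Prop :=
  ∃ w : ℕ → ℕ →₀ ℝ, IsBlockSeqOf w u ∧ (∀ k, nrm (w k) = 1) ∧ IsGenericAvg w ε ξ v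

/-- `x` is a smoothly normalized `(ε, ξ)` average of `u`. -/
def IsSmoothNormAvg (nrm : (ℕ →₀ ℝ) → ℝ) (u : ℕ → ℕ →₀ ℝ) (ε : ℝ) (ξ : ℕ)
    (x : ℕ →₀ ℝ) : Prop :=
  ∃ v : ℕ →₀ ℝ, IsAvg nrm u ε ξ v ∧ (1 : ℝ) / 2 ≤ nrm v ∧ x = (nrm v)⁻¹ • v

/-! ## Infinite subsets of `ℕ` as points of the Cantor space -/

/-- The increasing enumeration of the set coded by `S : ℕ → Bool` (1st element = index 0). -/
def enumOf (S : ℕ → Bool) : ℕ → ℕ := Nat.nth fun i => S i = true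

/-- The set coded by `S` is `M`-good. -/
def MGoodB (m l : ℕ → ℕ) (S : ℕ → Bool) : Prop := MGoodSeq m l (enumOf S)

/-- The infinite subsets of the set coded by `N₀`, as a topological (sub)space of the
Cantor space `ℕ → Bool` with the product (pointwise convergence) topology. -/
def SubsetsOf (N₀ : ℕ → Bool) : Type :=
  {S : ℕ → Bool // {i | S i = true}.Infinite ∧ ∀ i, S i = true → N₀ i = true}

instance (N₀ : ℕ → Bool) : TopologicalSpace (SubsetsOf N₀) :=
  instTopologicalSpaceSubtype


/-! ## STATEMENT 19 -/

section Aux19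

lemma empty_mem_schreier (n : ℕ) : (∅ : Finset ℕ) ∈ Schreier n := by
  cases n with
  | zero => show (∅ : Finset ℕ).card ≤ 1; simp
  | succ n => exact Or.inl rfl

lemma minF_le {I : Finset ℕ} {q : ℕ} (h : q ∈ I) : minF I ≤ q :=
  Nat.sInf_le (by exact_mod_cast h)

lemma minF_mem {I : Finset ℕ} (h : I.Nonempty) : minF I ∈ I := by
  have : sInf (I : Set ℕ) ∈ (I : Set ℕ) := Nat.sInf_mem (by exact_mod_cast h)
  exact_mod_cast this

/-- Schreier families are hereditary and spreading, in the following combined form. -/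
lemma schreier_dom (n : ℕ) : ∀ (P Q : Finset ℕ) (f : ℕ → ℕ),
    P ∈ Schreier n →
    (∀ q ∈ Q, ∀ q' ∈ Q, q < q' → f q < f q') →
    (∀ q ∈ Q, f q ∈ P) → (∀ q ∈ Q, f q ≤ q) → Q ∈ Schreier n := by
  induction n with
  | zero =>
    intro P Q f hP hmono hfP hfle
    have hinj : Set.InjOn f Q := by
      intro q hq q' hq' h
      by_contra hne
      rcases lt_or_gt_of_ne hne with hlt | hlt
      · exact absurd h (ne_of_lt (hmono q hq q' hq' hlt))
      · exact absurd h.symm (ne_of_lt (hmono q' hq' q hq hlt))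
    have hcard : Q.card ≤ P.card := Finset.card_le_card_of_injOn f hfP hinj
    have hP1 : P.card ≤ 1 := hP
    exact le_trans hcard hP1
  | succ n ih =>
    intro P Q f hP hmono hfP hfle
    rcases Q.eq_empty_or_nonempty with rfl | hQne
    · exact Or.inl rfl
    rcases hP with hPe | ⟨k, G, hk, hG, hGlt, hGmin, rfl⟩
    · exfalso
      obtain ⟨q, hq⟩ := hQne
      have := hfP q hq
      rw [hPe] at this
      exact absurd this (Finset.notMem_empty _)
    classical
    set Qi : ℕ → Finset ℕ := fun i => Q.filter fun q => f q ∈ G i with hQidef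
    have hQisub : ∀ i, Qi i ⊆ Q := fun i => Finset.filter_subset _ _
    have hcover : ∀ q ∈ Q, ∃ i, i < k ∧ q ∈ Qi i := by
      intro q hq
      rcases Finset.mem_biUnion.1 (hfP q hq) with ⟨i, hi, hfi⟩
      exact ⟨i, Finset.mem_range.1 hi, Finset.mem_filter.2 ⟨hq, hfi⟩⟩
    set good : Finset ℕ := (Finset.range k).filter (fun i => (Qi i).Nonempty) with hgooddef
    have hgood_lt : ∀ i ∈ good, i < k := fun i hi =>
      Finset.mem_range.1 (Finset.mem_filter.1 hi).1
    have hgoodne : good.Nonempty := by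
      obtain ⟨q, hq⟩ := hQne
      obtain ⟨i, hik, hqi⟩ := hcover q hq
      exact ⟨i, Finset.mem_filter.2 ⟨Finset.mem_range.2 hik, ⟨q, hqi⟩⟩⟩
    set k' := good.card with hk'def
    have hk'pos : 0 < k' := Finset.card_pos.2 hgoodne
    have hk'k : k' ≤ k := by
      calc k' ≤ (Finset.range k).card := Finset.card_le_card (Finset.filter_subset _ _)
      _ = k := Finset.card_range k
    set σ := good.orderEmbOfFin (rfl : good.card = k') with hσdef
    have hσmem : ∀ j : Fin k', (σ j : ℕ) ∈ good := fun j => Finset.orderEmbOfFin_mem _ _ _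
    set G' : ℕ → Finset ℕ := fun j => if h : j < k' then Qi (σ ⟨j, h⟩) else ∅ with hG'def
    refine Or.inr ⟨k', G', hk'pos, ?_, ?_, ?_, ?_⟩
    · intro j hj
      rw [hG'def]; simp only [hj, dif_pos]
      have hmem := hσmem ⟨j, hj⟩
      have hik : (σ ⟨j, hj⟩ : ℕ) < k := hgood_lt _ hmem
      constructor
      · refine ih (G _) _ f (hG _ hik).1 ?_ ?_ ?_
        · intro q hq q' hq' hlt; exact hmono q (hQisub _ hq) q' (hQisub _ hq') hlt
        · intro q hq; exact (Finset.mem_filter.1 hq).2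
        · intro q hq; exact hfle q (hQisub _ hq)
      · exact (Finset.mem_filter.1 hmem).2
    · intro i j hij hjk'
      have hik' : i < k' := lt_trans hij hjk'
      rw [hG'def]; simp only [hik', hjk', dif_pos]
      intro q hq q' hq'
      have hσlt : (σ ⟨i, hik'⟩ : ℕ) < (σ ⟨j, hjk'⟩ : ℕ) := by
        exact σ.strictMono (by exact hij)
      have hfq : f q ∈ G (σ ⟨i, hik'⟩) := (Finset.mem_filter.1 hq).2
      have hfq' : f q' ∈ G (σ ⟨j, hjk'⟩) := (Finset.mem_filter.1 hq').2
      have hflt : f q < f q' :=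
        hGlt _ _ hσlt (hgood_lt _ (hσmem ⟨j, hjk'⟩)) _ hfq _ hfq'
      by_contra hle
      push_neg at hle
      rcases lt_or_eq_of_le hle with hlt | rfl
      · exact absurd (hmono q' (hQisub _ hq') q (hQisub _ hq) hlt) (by omega)
      · exact absurd hflt (lt_irrefl _)
    · intro q hq
      rw [hG'def] at hq; simp only [hk'pos, dif_pos] at hq
      have hfq : f q ∈ G (σ ⟨0, hk'pos⟩) := (Finset.mem_filter.1 hq).2
      have hkfq : k ≤ f q := by
        rcases Nat.eq_zero_or_pos (σ ⟨0, hk'pos⟩ : ℕ) with h0 | h0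
        · rw [h0] at hfq; exact hGmin _ hfq
        · obtain ⟨g0, hg0⟩ := (hG 0 hk).2
          exact le_trans (hGmin g0 hg0)
            (le_of_lt (hGlt 0 _ h0 (hgood_lt _ (hσmem ⟨0, hk'pos⟩)) g0 hg0 _ hfq))
      calc k' ≤ k := hk'k
      _ ≤ f q := hkfq
      _ ≤ q := hfle q (hQisub _ hq)
    · ext q
      simp only [Finset.mem_biUnion, Finset.mem_range]
      constructor
      · intro hq
        obtain ⟨i, hik, hqi⟩ := hcover q hq
        have higood : i ∈ good := Finset.mem_filter.2 ⟨Finset.mem_range.2 hik, ⟨q, hqi⟩⟩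
        have : i ∈ Set.range σ := by
          rw [Finset.range_orderEmbOfFin]; exact_mod_cast higood
        obtain ⟨⟨j, hj⟩, hji⟩ := this
        refine ⟨j, hj, ?_⟩
        rw [hG'def]; simp only [hj, dif_pos]
        rw [dif_pos (show j < k' from hj), hji]; exact hqi
      · rintro ⟨j, hj, hq⟩
        rw [hG'def] at hq; simp only [hj, dif_pos] at hq
        exact hQisub _ hq

lemma alt_aux (a : ℕ → ℝ) (k : ℕ) (hpos : ∀ i < k, 0 ≤ a i)
    (hanti : ∀ i j, i ≤ j → j < k → a j ≤ a i) :
    ∀ d s, s + d < k →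
      0 ≤ (-1:ℝ)^(s+1) * ∑ i ∈ Finset.Icc s (s+d), ((-1:ℝ)^(i+1) * a i) ∧
      (-1:ℝ)^(s+1) * ∑ i ∈ Finset.Icc s (s+d), ((-1:ℝ)^(i+1) * a i) ≤ a s := by
  intro d
  induction d with
  | zero =>
    intro s hs
    simp only [Nat.add_zero, Finset.Icc_self, Finset.sum_singleton]
    have h1 : (-1:ℝ)^(s+1) * ((-1:ℝ)^(s+1) * a s) = a s := by
      rw [← mul_assoc, ← mul_pow]; norm_num
    rw [h1]
    exact ⟨hpos s (by omega), le_refl _⟩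
  | succ d ihd =>
    intro s hs
    have h1 : Finset.Icc s (s + (d+1)) = insert s (Finset.Icc (s+1) (s+1+d)) := by
      ext i; simp only [Finset.mem_Icc, Finset.mem_insert]; omega
    have h2 : s ∉ Finset.Icc (s+1) (s+1+d) := by simp [Finset.mem_Icc]
    rw [h1, Finset.sum_insert h2]
    obtain ⟨ih1, ih2⟩ := ihd (s+1) (by omega)
    set S := ∑ i ∈ Finset.Icc (s+1) (s+1+d), ((-1:ℝ)^(i+1) * a i) with hS
    have hsq : (-1:ℝ)^(s+1) * ((-1:ℝ)^(s+1) * a s) = a s := by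
      rw [← mul_assoc, ← mul_pow]; norm_num
    have hflip : (-1:ℝ)^(s+1) * S = -((-1:ℝ)^(s+1+1) * S) := by
      rw [pow_succ]; ring
    have haa : a (s+1) ≤ a s := hanti s (s+1) (by omega) (by omega)
    rw [mul_add, hsq, hflip]
    constructor <;> linarith

lemma alt_bound (a : ℕ → ℝ) (k : ℕ) (hpos : ∀ i < k, 0 ≤ a i)
    (hanti : ∀ i j, i ≤ j → j < k → a j ≤ a i) {s e : ℕ} (hse : s ≤ e) (hek : e < k) :
    |∑ i ∈ Finset.Icc s e, ((-1:ℝ)^(i+1) * a i)| ≤ a s := by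
  obtain ⟨d, rfl⟩ : ∃ d, e = s + d := ⟨e - s, by omega⟩
  obtain ⟨h1, h2⟩ := alt_aux a k hpos hanti d s hek
  have habs : |(-1:ℝ)^(s+1)| = 1 := by
    rw [abs_pow, abs_neg, abs_one, one_pow]
  calc |∑ i ∈ Finset.Icc s (s+d), ((-1:ℝ)^(i+1) * a i)|
      = |(-1:ℝ)^(s+1)| * |∑ i ∈ Finset.Icc s (s+d), ((-1:ℝ)^(i+1) * a i)| := by
        rw [habs, one_mul]
  _ = |(-1:ℝ)^(s+1) * ∑ i ∈ Finset.Icc s (s+d), ((-1:ℝ)^(i+1) * a i)| := (abs_mul _ _).symm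
  _ = (-1:ℝ)^(s+1) * ∑ i ∈ Finset.Icc s (s+d), ((-1:ℝ)^(i+1) * a i) := abs_of_nonneg h1
  _ ≤ a s := h2

end Aux19


theorem statement19 (k ξ : ℕ) (a : ℕ → ℝ) (t : ℕ → ℕ)
    (hpos : ∀ i < k, 0 ≤ a i) (hanti : ∀ i j, i ≤ j → j < k → a j ≤ a i)
    (ht : ∀ i j, i < j → j < k → t i < t j) :
    cschreierNorm ξ (∑ i ∈ Finset.range k,
        ((-1 : ℝ) ^ (i + 1) * a i) • Finsupp.single (t i) (1 : ℝ)) ≤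
      schreierNorm ξ (∑ i ∈ Finset.range k, a i • Finsupp.single (t i) (1 : ℝ)) := by
  classical
  set x : ℕ →₀ ℝ := ∑ i ∈ Finset.range k,
      ((-1 : ℝ) ^ (i + 1) * a i) • Finsupp.single (t i) (1 : ℝ) with hxdef
  set y : ℕ →₀ ℝ := ∑ i ∈ Finset.range k, a i • Finsupp.single (t i) (1 : ℝ) with hydef
  -- pointwise evaluations
  have hxapp : ∀ p, x p = ∑ i ∈ Finset.range k,
      (if t i = p then (-1 : ℝ) ^ (i + 1) * a i else 0) := by
    intro p
    rw [hxdef, Finsupp.finset_sum_apply]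
    refine Finset.sum_congr rfl fun i _ => ?_
    rw [Finsupp.smul_apply, Finsupp.single_apply, smul_eq_mul]
    split <;> simp
  have htinj : ∀ i < k, ∀ i' < k, t i = t i' → i = i' := by
    intro i hi i' hi' he
    by_contra hne
    rcases lt_or_gt_of_ne hne with hlt | hlt
    · exact absurd he (ne_of_lt (ht i i' hlt hi'))
    · exact absurd he.symm (ne_of_lt (ht i' i hlt hi))
  have hyapp : ∀ i < k, y (t i) = a i := by
    intro i hi
    rw [hydef, Finsupp.finset_sum_apply]
    have : ∀ i' ∈ Finset.range k,
        (a i' • Finsupp.single (t i') (1:ℝ)) (t i) = if t i' = t i then a i' else 0 := by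
      intro i' _
      rw [Finsupp.smul_apply, Finsupp.single_apply, smul_eq_mul]
      split <;> simp
    rw [Finset.sum_congr rfl this,
      Finset.sum_eq_single_of_mem i (Finset.mem_range.2 hi)]
    · rw [if_pos rfl]
    · intro i' hi' hne
      exact if_neg fun he => hne (htinj i' (Finset.mem_range.1 hi') i hi he)
  -- the Schreier-norm set is bounded above
  have hbdd : BddAbove {r : ℝ | ∃ F ∈ Schreier ξ, r = ∑ i ∈ F, |y i|} := by
    refine ⟨∑ i ∈ y.support, |y i|, ?_⟩
    rintro r ⟨F, _, rfl⟩
    have h1 : ∑ i ∈ F, |y i| = ∑ i ∈ F ∩ y.support, |y i| := by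
      refine (Finset.sum_subset Finset.inter_subset_left ?_).symm
      intro i hi hni
      have : y i = 0 := by
        by_contra h
        exact hni (Finset.mem_inter.2 ⟨hi, Finsupp.mem_support_iff.2 h⟩)
      simp [this]
    rw [h1]
    exact Finset.sum_le_sum_of_subset_of_nonneg Finset.inter_subset_right
      fun i _ _ => abs_nonneg _
  have hle_norm : ∀ F ∈ Schreier ξ, ∑ i ∈ F, |y i| ≤ schreierNorm ξ y :=
    fun F hF => le_csSup hbdd ⟨F, hF, rfl⟩
  -- the conditional set is nonempty
  have hne0 : (0:ℝ) ∈ {r : ℝ | ∃ (m : ℕ) (J : ℕ → Finset ℕ),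
      (∀ i < m, ∃ a b : ℕ, J i = Finset.Icc a b) ∧ Admissible ξ m J ∧
      r = ∑ i ∈ Finset.range m, |∑ p ∈ J i, x p|} := by
    refine ⟨0, fun _ => ∅, fun i hi => absurd hi (Nat.not_lt_zero _), ?_, by simp⟩
    refine ⟨fun i hi => absurd hi (Nat.not_lt_zero _),
      fun i j hij hj => absurd hj (Nat.not_lt_zero _), ?_⟩
    simpa using empty_mem_schreier ξ
  rw [cschreierNorm]
  refine csSup_le ⟨0, hne0⟩ ?_
  rintro r ⟨m, J, hJint, ⟨hJne, hJlt, hJadm⟩, rfl⟩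
  -- index sets
  set Ij : ℕ → Finset ℕ := fun j => (Finset.range k).filter (fun i => t i ∈ J j) with hIjdef
  have hsum : ∀ j, ∑ p ∈ J j, x p = ∑ i ∈ Ij j, ((-1:ℝ)^(i+1) * a i) := by
    intro j
    calc ∑ p ∈ J j, x p
        = ∑ p ∈ J j, ∑ i ∈ Finset.range k, (if t i = p then (-1:ℝ)^(i+1) * a i else 0) :=
          Finset.sum_congr rfl fun p _ => hxapp p
    _ = ∑ i ∈ Finset.range k, ∑ p ∈ J j, (if t i = p then (-1:ℝ)^(i+1) * a i else 0) :=
          Finset.sum_comm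
    _ = ∑ i ∈ Finset.range k, (if t i ∈ J j then (-1:ℝ)^(i+1) * a i else 0) := by
          refine Finset.sum_congr rfl fun i _ => ?_
          exact Finset.sum_ite_eq (J j) (t i) (fun _ => (-1:ℝ)^(i+1) * a i)
    _ = ∑ i ∈ Ij j, ((-1:ℝ)^(i+1) * a i) := (Finset.sum_filter _ _).symm
  have htmono : ∀ i i', i ≤ i' → i' < k → t i ≤ t i' := by
    intro i i' h h'
    rcases lt_or_eq_of_le h with hl | he
    · exact (ht i i' hl h').le
    · rw [he]
  have hIj_lt : ∀ j, ∀ i ∈ Ij j, i < k := fun j i hi =>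
    Finset.mem_range.1 (Finset.mem_filter.1 hi).1
  have hIj_mem : ∀ j, ∀ i ∈ Ij j, t i ∈ J j := fun j i hi => (Finset.mem_filter.1 hi).2
  -- per-interval bound
  have hjb : ∀ j < m, ∀ h : (Ij j).Nonempty, |∑ p ∈ J j, x p| ≤ a (minF (Ij j)) := by
    intro j hj h
    have hmin : minF (Ij j) ∈ Ij j := minF_mem h
    have hmax : (Ij j).max' h ∈ Ij j := Finset.max'_mem _ _
    have hicc : Ij j = Finset.Icc (minF (Ij j)) ((Ij j).max' h) := by
      ext i
      simp only [Finset.mem_Icc]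
      constructor
      · intro hi; exact ⟨minF_le hi, Finset.le_max' _ _ hi⟩
      · rintro ⟨h1, h2⟩
        have hik : i < k := lt_of_le_of_lt h2 (hIj_lt j _ hmax)
        obtain ⟨aJ, bJ, hab⟩ := hJint j hj
        have hJ1 := hIj_mem j _ hmin
        have hJ2 := hIj_mem j _ hmax
        rw [hab] at hJ1 hJ2
        simp only [Finset.mem_Icc] at hJ1 hJ2
        refine Finset.mem_filter.2 ⟨Finset.mem_range.2 hik, ?_⟩
        rw [hab]
        simp only [Finset.mem_Icc]
        exact ⟨le_trans hJ1.1 (htmono _ i h1 hik),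
          le_trans (htmono i _ h2 (hIj_lt j _ hmax)) hJ2.2⟩
    rw [hsum j]
    have hb := alt_bound a k hpos hanti (minF_le hmax) (hIj_lt j _ hmax)
    rwa [← hicc] at hb
  set good : Finset ℕ := (Finset.range m).filter (fun j => (Ij j).Nonempty) with hgooddef
  have hgood_lt : ∀ j ∈ good, j < m := fun j hj =>
    Finset.mem_range.1 (Finset.mem_filter.1 hj).1
  have hgood_ne : ∀ j ∈ good, (Ij j).Nonempty := fun j hj => (Finset.mem_filter.1 hj).2
  -- restrict the sum to good indices
  have hrestrict : ∑ j ∈ Finset.range m, |∑ p ∈ J j, x p| = ∑ j ∈ good, |∑ p ∈ J j, x p| := by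
    refine (Finset.sum_subset (Finset.filter_subset _ _) ?_).symm
    intro j hjm hjg
    have hempty : Ij j = ∅ := by
      rw [← Finset.not_nonempty_iff_eq_empty]
      intro hne
      exact hjg (Finset.mem_filter.2 ⟨hjm, hne⟩)
    rw [hsum j, hempty]
    simp
  -- the selected points
  have hqmem : ∀ j ∈ good, t (minF (Ij j)) ∈ J j := fun j hj =>
    hIj_mem j _ (minF_mem (hgood_ne j hj))
  have hqk : ∀ j ∈ good, minF (Ij j) < k := fun j hj =>
    hIj_lt j _ (minF_mem (hgood_ne j hj))
  have hinj : ∀ j ∈ good, ∀ j' ∈ good, t (minF (Ij j)) = t (minF (Ij j')) → j = j' := by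
    intro j hj j' hj' he
    by_contra hne
    rcases lt_or_gt_of_ne hne with hlt | hlt
    · exact absurd he (ne_of_lt (hJlt j j' hlt (hgood_lt j' hj') _ (hqmem j hj) _ (hqmem j' hj')))
    · exact absurd he.symm
        (ne_of_lt (hJlt j' j hlt (hgood_lt j hj) _ (hqmem j' hj') _ (hqmem j hj)))
  set F : Finset ℕ := good.image (fun j => t (minF (Ij j))) with hFdef
  have hFsum : ∑ q ∈ F, |y q| = ∑ j ∈ good, a (minF (Ij j)) := by
    rw [hFdef, Finset.sum_image hinj]
    refine Finset.sum_congr rfl fun j hj => ?_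
    rw [hyapp _ (hqk j hj)]
    exact abs_of_nonneg (hpos _ (hqk j hj))
  -- membership of F in the Schreier family, via domination
  have hFmem : F ∈ Schreier ξ := by
    set f : ℕ → ℕ := fun q => minF (J (sInf {j | j < m ∧ q ∈ J j})) with hfdef
    have hfval : ∀ j ∈ good, f (t (minF (Ij j))) = minF (J j) := by
      intro j hj
      have hjin : j ∈ {j' | j' < m ∧ t (minF (Ij j)) ∈ J j'} := ⟨hgood_lt j hj, hqmem j hj⟩
      have hmem := Nat.sInf_mem (s := {j' | j' < m ∧ t (minF (Ij j)) ∈ J j'}) ⟨j, hjin⟩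
      have heq : sInf {j' | j' < m ∧ t (minF (Ij j)) ∈ J j'} = j := by
        obtain ⟨hm1, hm2⟩ := hmem
        set j'' := sInf {j' | j' < m ∧ t (minF (Ij j)) ∈ J j'}
        by_contra hne
        rcases lt_or_gt_of_ne hne with hlt | hlt
        · exact absurd rfl
            (ne_of_lt (hJlt j'' j hlt (hgood_lt j hj) _ hm2 _ (hqmem j hj)))
        · exact absurd rfl
            (ne_of_lt (hJlt j j'' hlt hm1 _ (hqmem j hj) _ hm2))
      rw [hfdef]
      simp only
      rw [heq]
    refine schreier_dom ξ ((Finset.range m).image fun i => minF (J i)) F f hJadm ?_ ?_ ?_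
    · rintro q hq q' hq' hlt
      obtain ⟨j, hj, rfl⟩ := Finset.mem_image.1 hq
      obtain ⟨j', hj', rfl⟩ := Finset.mem_image.1 hq'
      rw [hfval j hj, hfval j' hj']
      have hjj' : j < j' := by
        by_contra hle
        push_neg at hle
        rcases lt_or_eq_of_le hle with h2 | rfl
        · exact absurd hlt (not_lt_of_gt
            (hJlt j' j h2 (hgood_lt j hj) _ (hqmem j' hj') _ (hqmem j hj)))
        · exact absurd hlt (lt_irrefl _)
      exact hJlt j j' hjj' (hgood_lt j' hj') _ (minF_mem (hJne j (hgood_lt j hj))) _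
        (minF_mem (hJne j' (hgood_lt j' hj')))
    · rintro q hq
      obtain ⟨j, hj, rfl⟩ := Finset.mem_image.1 hq
      rw [hfval j hj]
      exact Finset.mem_image.2 ⟨j, Finset.mem_range.2 (hgood_lt j hj), rfl⟩
    · rintro q hq
      obtain ⟨j, hj, rfl⟩ := Finset.mem_image.1 hq
      rw [hfval j hj]
      exact minF_le (hqmem j hj)
  -- conclude
  calc ∑ j ∈ Finset.range m, |∑ p ∈ J j, x p|
      = ∑ j ∈ good, |∑ p ∈ J j, x p| := hrestrict
  _ ≤ ∑ j ∈ good, a (minF (Ij j)) :=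
      Finset.sum_le_sum fun j hj => hjb j (hgood_lt j hj) (hgood_ne j hj)
  _ = ∑ q ∈ F, |y q| := hFsum.symm
  _ ≤ schreierNorm ξ y := hle_norm F hFmem

end Gasparis
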